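/- Let G be a group with a left-invariant partial order < admitting a left-invariant simply connected extension (∼_u, ∼_l), and let H be a completely convex normal subgroup of G. Then for all g1, g2, g3 ∈ G: (1) if g1H <' g2H and g2H <' g3H, then g1H <' g3H; (2) if g1H ∼_u' g2H and g2H ∼_l' g3H, then g1H <' g3H; (3) if g1H ∼_u' g2H and g3H <' g2H, then g1H ∼_u' g3H; (4) if g1H ∼_l' g2H and g2H <' g3H, then g1H ∼_l' g3H. -/
import Mathlib


open Pointwise

namespace PaperSC

variable {S : Type*}

/-- Exactly one of four propositions holds. -/
def ExactlyOne4 (p q r s : Prop) : Prop :=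
  (p ∨ q ∨ r ∨ s) ∧ (p → ¬q ∧ ¬r ∧ ¬s) ∧ (q → ¬r ∧ ¬s) ∧ (r → ¬s)

/-- `x` and `y` are incomparable with respect to the strict order `lt`. -/
def Incomp (lt : S → S → Prop) (x y : S) : Prop :=
  x ≠ y ∧ ¬ lt x y ∧ ¬ lt y x

/-- The reflexive closure of `lt`. -/
def Le' (lt : S → S → Prop) (x y : S) : Prop := x = y ∨ lt x y

/-- `x ∼ᵤ y` : `x` and `y` are incomparable and have a common upper bound. -/
def SimU (lt : S → S → Prop) (x y : S) : Prop :=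
  Incomp lt x y ∧ ∃ z, Le' lt x z ∧ Le' lt y z

/-- `x ∼ₗ y` : `x` and `y` are incomparable and have a common lower bound. -/
def SimL (lt : S → S → Prop) (x y : S) : Prop :=
  Incomp lt x y ∧ ∃ z, Le' lt z x ∧ Le' lt z y

/-- Every incomparable pair has a common upper bound or a common lower bound. -/
def StronglyConnectedRel (lt : S → S → Prop) : Prop :=
  ∀ x y, Incomp lt x y → SimU lt x y ∨ SimL lt x y

/-- Acyclicity: `x ∼ᵤ y` and `x ∼ₗ z` imply `y < z`. -/
def AcyclicRel (lt : S → S → Prop) : Prop :=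
  ∀ x y z, SimU lt x y → SimL lt x z → lt y z

/-- `(u, l)` is a simply connected extension of the strict partial order `lt`. -/
structure IsSCExt (lt u l : S → S → Prop) : Prop where
  u_symm : ∀ x y, u x y → u y x
  l_symm : ∀ x y, l x y → l y x
  exactly_one : ∀ x y, x ≠ y → ExactlyOne4 (lt x y) (lt y x) (u x y) (l x y)
  u_of_ub : ∀ x y, Incomp lt x y → (∃ z, Le' lt x z ∧ Le' lt y z) → u x y
  l_of_lb : ∀ x y, Incomp lt x y → (∃ z, Le' lt z x ∧ Le' lt z y) → l x y
  acyclic : ∀ x y z, u x y → l x z → lt y z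

/-- `b` is between `a` and `c` (with respect to `lt` and the extension `(u, l)`). -/
def Btwn (lt u l : S → S → Prop) (a c b : S) : Prop :=
  (lt a c ∧ ((lt a b ∧ lt b c) ∨ (u a b ∧ l b c))) ∨
  (lt c a ∧ ((lt c b ∧ lt b a) ∨ (u c b ∧ l b a))) ∨
  (l a c ∧ ((l a b ∧ lt b c) ∨ (l c b ∧ lt b a))) ∨
  (u a c ∧ ((u a b ∧ lt c b) ∨ (u c b ∧ lt a b)))

/-- The between set `B_{a,b}`; it equals `{a}` when `a = b`. -/
def BSet (lt u l : S → S → Prop) (a b : S) : Set S :=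
  {a, b} ∪ {x | a ≠ b ∧ Btwn lt u l a b x}

/-- The set `A` is totally ordered by `lt`. -/
def IsChainRel (lt : S → S → Prop) (A : Set S) : Prop :=
  ∀ p ∈ A, ∀ q ∈ A, p = q ∨ lt p q ∨ lt q p

/-- `x O y` iff `B_{x,y}` is totally ordered by `lt`. -/
def ORel (lt u l : S → S → Prop) (x y : S) : Prop :=
  IsChainRel lt (BSet lt u l x y)

/-- The extension is rectifiable: every between set is a finite union of `O`-classes. -/
def Rectifiable (lt u l : S → S → Prop) : Prop :=
  ∀ a b : S, a ≠ b → ∃ F : Finset S,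
    (↑F : Set S) ⊆ BSet lt u l a b ∧
    ∀ x ∈ BSet lt u l a b, ∃ c ∈ F, ORel lt u l x c

/-- A relation on a group is left-invariant. -/
def LeftInvariant {G : Type*} [Group G] (r : G → G → Prop) : Prop :=
  ∀ f g h : G, r g h → r (f * g) (f * h)

/-- A subgroup `H` is completely convex: between sets of elements of `H` lie in `H`. -/
def CompletelyConvex {G : Type*} [Group G] (lt u l : G → G → Prop) (H : Subgroup G) : Prop :=
  ∀ h1 ∈ H, ∀ h2 ∈ H, BSet lt u l h1 h2 ⊆ (H : Set G)

/-- The relation induced on the quotient `G ⧸ H` by a relation `r` on `G`: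
`g₁H r' g₂H` iff the cosets are distinct and `r g₁ (g₂ h)` for some `h ∈ H`. -/
def QRel {G : Type*} [Group G] (r : G → G → Prop) (H : Subgroup G) (x y : G ⧸ H) : Prop :=
  x ≠ y ∧ ∃ g1 g2 : G, (g1 : G ⧸ H) = x ∧ (g2 : G ⧸ H) = y ∧ ∃ h ∈ H, r g1 (g2 * h)

section Helpers

variable {G : Type*} [Group G] {H : Subgroup G} [H.Normal]

lemma coe_mul_mem {g h : G} (hh : h ∈ H) : ((g * h : G) : G ⧸ H) = (g : G ⧸ H) := by
  rw [QuotientGroup.mk_mul, (QuotientGroup.eq_one_iff h).mpr hh, mul_one]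

lemma shift_fst {r : G → G → Prop} (hr : LeftInvariant r) {x y x' : G}
    (hx : (x : G ⧸ H) = (x' : G ⧸ H)) (hxy : r x y) :
    ∃ m ∈ H, r x' (y * m) := by
  refine ⟨y⁻¹ * (x' * x⁻¹) * y, ?_, ?_⟩
  · rw [← QuotientGroup.eq_one_iff]
    simp only [QuotientGroup.mk_mul, QuotientGroup.mk_inv]
    rw [← hx]
    group
  · have h1 := hr (x' * x⁻¹) x y hxy
    have e1 : x' * x⁻¹ * x = x' := by group
    have e2 : x' * x⁻¹ * y = y * (y⁻¹ * (x' * x⁻¹) * y) := by group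
    rwa [e1, e2] at h1

lemma shift_snd {r : G → G → Prop} (hr : LeftInvariant r) {x y y' : G}
    (hy : (y : G ⧸ H) = (y' : G ⧸ H)) (hxy : r x y) :
    ∃ m ∈ H, r (x * m) y' := by
  refine ⟨x⁻¹ * (y' * y⁻¹) * x, ?_, ?_⟩
  · rw [← QuotientGroup.eq_one_iff]
    simp only [QuotientGroup.mk_mul, QuotientGroup.mk_inv]
    rw [← hy]
    group
  · have h1 := hr (y' * y⁻¹) x y hxy
    have e1 : y' * y⁻¹ * y = y' := by group
    have e2 : y' * y⁻¹ * x = x * (x⁻¹ * (y' * y⁻¹) * x) := by group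
    rwa [e1, e2] at h1

lemma qrel_elim {r : G → G → Prop} (hr : LeftInvariant r) {g1 g2 : G}
    (hq : QRel r H (g1 : G ⧸ H) (g2 : G ⧸ H)) :
    (g1 : G ⧸ H) ≠ (g2 : G ⧸ H) ∧ ∃ h ∈ H, r g1 (g2 * h) := by
  obtain ⟨hne, a, b, ha, hb, h, hh, hab⟩ := hq
  refine ⟨hne, ?_⟩
  obtain ⟨m, hm, h1⟩ := shift_fst hr ha hab
  have hmem : g2⁻¹ * (b * h * m) ∈ H := by
    rw [← QuotientGroup.eq_one_iff]
    simp only [QuotientGroup.mk_mul, QuotientGroup.mk_inv, hb,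
      (QuotientGroup.eq_one_iff h).mpr hh, (QuotientGroup.eq_one_iff m).mpr hm]
    group
  refine ⟨_, hmem, ?_⟩
  have e : b * h * m = g2 * (g2⁻¹ * (b * h * m)) := by group
  rwa [e] at h1

lemma btwn_inv {lt u l : G → G → Prop}
    (hltinv : LeftInvariant lt) (huinv : LeftInvariant u) (hlinv : LeftInvariant l)
    (f : G) {a c b : G} (hb : Btwn lt u l a c b) : Btwn lt u l (f * a) (f * c) (f * b) := by
  rcases hb with ⟨h1, ⟨h2, h3⟩ | ⟨h2, h3⟩⟩ | ⟨h1, ⟨h2, h3⟩ | ⟨h2, h3⟩⟩ |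
    ⟨h1, ⟨h2, h3⟩ | ⟨h2, h3⟩⟩ | ⟨h1, ⟨h2, h3⟩ | ⟨h2, h3⟩⟩
  · exact Or.inl ⟨hltinv f _ _ h1, Or.inl ⟨hltinv f _ _ h2, hltinv f _ _ h3⟩⟩
  · exact Or.inl ⟨hltinv f _ _ h1, Or.inr ⟨huinv f _ _ h2, hlinv f _ _ h3⟩⟩
  · exact Or.inr (Or.inl ⟨hltinv f _ _ h1, Or.inl ⟨hltinv f _ _ h2, hltinv f _ _ h3⟩⟩)
  · exact Or.inr (Or.inl ⟨hltinv f _ _ h1, Or.inr ⟨huinv f _ _ h2, hlinv f _ _ h3⟩⟩)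
  · exact Or.inr (Or.inr (Or.inl ⟨hlinv f _ _ h1, Or.inl ⟨hlinv f _ _ h2, hltinv f _ _ h3⟩⟩))
  · exact Or.inr (Or.inr (Or.inl ⟨hlinv f _ _ h1, Or.inr ⟨hlinv f _ _ h2, hltinv f _ _ h3⟩⟩))
  · exact Or.inr (Or.inr (Or.inr ⟨huinv f _ _ h1, Or.inl ⟨huinv f _ _ h2, hltinv f _ _ h3⟩⟩))
  · exact Or.inr (Or.inr (Or.inr ⟨huinv f _ _ h1, Or.inr ⟨huinv f _ _ h2, hltinv f _ _ h3⟩⟩))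

lemma conv_mem {lt u l : G → G → Prop}
    (hltinv : LeftInvariant lt) (huinv : LeftInvariant u) (hlinv : LeftInvariant l)
    (hcc : CompletelyConvex lt u l H)
    {g x b : G} (hgx : (g : G ⧸ H) = (x : G ⧸ H)) (hne : g ≠ x)
    (hb : Btwn lt u l g x b) : (b : G ⧸ H) = (g : G ⧸ H) := by
  have h2 : g⁻¹ * x ∈ H := QuotientGroup.eq.mp hgx
  have hbt : Btwn lt u l (g⁻¹ * g) (g⁻¹ * x) (g⁻¹ * b) :=
    btwn_inv hltinv huinv hlinv g⁻¹ hb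
  rw [inv_mul_cancel] at hbt
  have hne1 : (1 : G) ≠ g⁻¹ * x := by
    intro e
    apply hne
    have := congrArg (g * ·) e
    simpa using this
  have hmem : g⁻¹ * b ∈ (H : Set G) :=
    hcc 1 (one_mem H) (g⁻¹ * x) h2 (Set.mem_union_right _ ⟨hne1, hbt⟩)
  exact (QuotientGroup.eq.mpr hmem).symm

end Helpers

/-- The four transitivity-type properties of the induced relations on `G ⧸ H`. -/
theorem stmt12 {G : Type*} [Group G] (lt u l : G → G → Prop)
    (hirr : ∀ x : G, ¬ lt x x)
    (htrans : ∀ x y z : G, lt x y → lt y z → lt x z)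
    (hltinv : LeftInvariant lt) (huinv : LeftInvariant u) (hlinv : LeftInvariant l)
    (hsce : IsSCExt lt u l)
    (H : Subgroup G) [H.Normal]
    (hcc : CompletelyConvex lt u l H) :
    ∀ g1 g2 g3 : G,
      (QRel lt H (g1 : G ⧸ H) (g2 : G ⧸ H) → QRel lt H (g2 : G ⧸ H) (g3 : G ⧸ H) →
        QRel lt H (g1 : G ⧸ H) (g3 : G ⧸ H)) ∧
      (QRel u H (g1 : G ⧸ H) (g2 : G ⧸ H) → QRel l H (g2 : G ⧸ H) (g3 : G ⧸ H) →
        QRel lt H (g1 : G ⧸ H) (g3 : G ⧸ H)) ∧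
      (QRel u H (g1 : G ⧸ H) (g2 : G ⧸ H) → QRel lt H (g3 : G ⧸ H) (g2 : G ⧸ H) →
        QRel u H (g1 : G ⧸ H) (g3 : G ⧸ H)) ∧
      (QRel l H (g1 : G ⧸ H) (g2 : G ⧸ H) → QRel lt H (g2 : G ⧸ H) (g3 : G ⧸ H) →
        QRel l H (g1 : G ⧸ H) (g3 : G ⧸ H)) := by
  intro g1 g2 g3
  refine ⟨?_, ?_, ?_, ?_⟩
  · -- (1) lt' transitivity
    intro hq1 hq2
    obtain ⟨hne12, h, hh, h1⟩ := qrel_elim hltinv hq1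
    obtain ⟨hne23, h', hh', h2⟩ := qrel_elim hltinv hq2
    obtain ⟨m, hm, h3⟩ := shift_fst hltinv (coe_mul_mem hh).symm h2
    rw [mul_assoc] at h3
    have hmain : lt g1 (g3 * (h' * m)) := htrans _ _ _ h1 h3
    have hne13 : (g1 : G ⧸ H) ≠ (g3 : G ⧸ H) := by
      intro heq
      have hgx : (g1 : G ⧸ H) = ((g3 * (h' * m) : G) : G ⧸ H) :=
        heq.trans (coe_mul_mem (mul_mem hh' hm)).symm
      have hnec : g1 ≠ g3 * (h' * m) := fun e => hirr g1 (by rwa [← e] at hmain)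
      have hbt : Btwn lt u l g1 (g3 * (h' * m)) (g2 * h) :=
        Or.inl ⟨hmain, Or.inl ⟨h1, h3⟩⟩
      have := conv_mem hltinv huinv hlinv hcc hgx hnec hbt
      exact hne12 ((coe_mul_mem hh).symm.trans this).symm
    exact ⟨hne13, g1, g3, rfl, rfl, h' * m, mul_mem hh' hm, hmain⟩
  · -- (2) u' then l' gives lt'
    intro hq1 hq2
    obtain ⟨hne12, h, hh, h1⟩ := qrel_elim huinv hq1
    obtain ⟨hne23, h', hh', h2⟩ := qrel_elim hlinv hq2
    obtain ⟨m, hm, h3⟩ := shift_fst hlinv (coe_mul_mem hh).symm h2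
    rw [mul_assoc] at h3
    have hmain : lt g1 (g3 * (h' * m)) :=
      hsce.acyclic (g2 * h) g1 (g3 * (h' * m)) (hsce.u_symm _ _ h1) h3
    have hne13 : (g1 : G ⧸ H) ≠ (g3 : G ⧸ H) := by
      intro heq
      have hgx : (g1 : G ⧸ H) = ((g3 * (h' * m) : G) : G ⧸ H) :=
        heq.trans (coe_mul_mem (mul_mem hh' hm)).symm
      have hnec : g1 ≠ g3 * (h' * m) := fun e => hirr g1 (by rwa [← e] at hmain)
      have hbt : Btwn lt u l g1 (g3 * (h' * m)) (g2 * h) :=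
        Or.inl ⟨hmain, Or.inr ⟨h1, h3⟩⟩
      have := conv_mem hltinv huinv hlinv hcc hgx hnec hbt
      exact hne12 ((coe_mul_mem hh).symm.trans this).symm
    exact ⟨hne13, g1, g3, rfl, rfl, h' * m, mul_mem hh' hm, hmain⟩
  · -- (3) u' preserved under going down on the right
    intro hq1 hq2
    obtain ⟨hne12, h, hh, hu1⟩ := qrel_elim huinv hq1
    obtain ⟨hne32, h', hh', h2⟩ := qrel_elim hltinv hq2
    obtain ⟨m, hm, hltcb⟩ :=
      shift_snd hltinv ((coe_mul_mem hh').trans (coe_mul_mem hh).symm) h2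
    -- hltcb : lt (g3 * m) (g2 * h)
    have hneb : g1 ≠ g2 * h := fun e => hne12 (by rw [e, coe_mul_mem hh])
    obtain ⟨_, hep, heq', her⟩ := hsce.exactly_one g1 (g2 * h) hneb
    have nlp : ¬ lt g1 (g2 * h) := fun hp => (hep hp).2.1 hu1
    have nlq : ¬ lt (g2 * h) g1 := fun hq => (heq' hq).1 hu1
    have nls : ¬ l g1 (g2 * h) := her hu1
    have hinc : Incomp lt g1 (g3 * m) := by
      refine ⟨fun e => nlp (by rw [e]; exact hltcb), ?_, ?_⟩
      · exact fun hx => nlp (htrans _ _ _ hx hltcb)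
      · exact fun hx => nls (hsce.l_of_lb g1 (g2 * h) ⟨hneb, nlp, nlq⟩
          ⟨g3 * m, Or.inr hx, Or.inr hltcb⟩)
    have hmain : u g1 (g3 * m) := by
      rcases (hsce.exactly_one g1 (g3 * m) hinc.1).1 with hx | hx | hx | hx
      · exact absurd hx hinc.2.1
      · exact absurd hx hinc.2.2
      · exact hx
      · exact absurd (htrans _ _ _ (hsce.acyclic g1 (g2 * h) (g3 * m) hu1 hx) hltcb)
          (hirr (g2 * h))
    have hne13 : (g1 : G ⧸ H) ≠ (g3 : G ⧸ H) := by
      intro heq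
      have hgx : (g1 : G ⧸ H) = ((g3 * m : G) : G ⧸ H) :=
        heq.trans (coe_mul_mem hm).symm
      have hbt : Btwn lt u l g1 (g3 * m) (g2 * h) :=
        Or.inr (Or.inr (Or.inr ⟨hmain, Or.inl ⟨hu1, hltcb⟩⟩))
      have := conv_mem hltinv huinv hlinv hcc hgx hinc.1 hbt
      exact hne12 ((coe_mul_mem hh).symm.trans this).symm
    exact ⟨hne13, g1, g3, rfl, rfl, m, hm, hmain⟩
  · -- (4) l' preserved under going up on the right
    intro hq1 hq2
    obtain ⟨hne12, h, hh, hl1⟩ := qrel_elim hlinv hq1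
    obtain ⟨hne23, h', hh', h2⟩ := qrel_elim hltinv hq2
    obtain ⟨m, hm, hltbc⟩ := shift_fst hltinv (coe_mul_mem hh).symm h2
    rw [mul_assoc] at hltbc
    -- hltbc : lt (g2 * h) (g3 * (h' * m))
    have hneb : g1 ≠ g2 * h := fun e => hne12 (by rw [e, coe_mul_mem hh])
    obtain ⟨_, hep, heq', her⟩ := hsce.exactly_one g1 (g2 * h) hneb
    have nlp : ¬ lt g1 (g2 * h) := fun hp => (hep hp).2.2 hl1
    have nlq : ¬ lt (g2 * h) g1 := fun hq => (heq' hq).2 hl1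
    have nlu : ¬ u g1 (g2 * h) := fun hr => (her hr) hl1
    have hinc : Incomp lt g1 (g3 * (h' * m)) := by
      refine ⟨fun e => nlq (by rw [e]; exact hltbc), ?_, ?_⟩
      · exact fun hx => nlu (hsce.u_of_ub g1 (g2 * h) ⟨hneb, nlp, nlq⟩
          ⟨g3 * (h' * m), Or.inr hx, Or.inr hltbc⟩)
      · exact fun hx => nlq (htrans _ _ _ hltbc hx)
    have hmain : l g1 (g3 * (h' * m)) := by
      rcases (hsce.exactly_one g1 (g3 * (h' * m)) hinc.1).1 with hx | hx | hx | hx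
      · exact absurd hx hinc.2.1
      · exact absurd hx hinc.2.2
      · exact absurd (htrans _ _ _ hltbc (hsce.acyclic g1 (g3 * (h' * m)) (g2 * h) hx hl1))
          (hirr (g2 * h))
      · exact hx
    have hne13 : (g1 : G ⧸ H) ≠ (g3 : G ⧸ H) := by
      intro heq
      have hgx : (g1 : G ⧸ H) = ((g3 * (h' * m) : G) : G ⧸ H) :=
        heq.trans (coe_mul_mem (mul_mem hh' hm)).symm
      have hbt : Btwn lt u l g1 (g3 * (h' * m)) (g2 * h) :=
        Or.inr (Or.inr (Or.inl ⟨hmain, Or.inl ⟨hl1, hltbc⟩⟩))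
      have := conv_mem hltinv huinv hlinv hcc hgx hinc.1 hbt
      exact hne12 ((coe_mul_mem hh).symm.trans this).symm
    exact ⟨hne13, g1, g3, rfl, rfl, h' * m, mul_mem hh' hm, hmain⟩

end PaperSC
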